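/- arXiv:1403.3666 — 4 statements merged into one kernel-verified Lean document; each statement's English description precedes it below -/
import Mathlib

section
/- Let n ≥ 1 and let Q be an n×n complex positive semidefinite Hermitian matrix. Then (Re(det Q))^(1/n) equals the infimum of the set { Re(trace(H * Q)) : H an n×n complex positive definite Hermitian matrix with det H = n^(-n) }; that is, (Re(det Q))^(1/n) is the greatest lower bound of this set. -/
open ComplexOrder Matrix Finset

section Helpers
variable {n : ℕ}

private lemma unitary_conj_posDef' {V A : Matrix (Fin n) (Fin n) ℂ}
    (hA : A.PosDef) (hV : V ∈ Matrix.unitaryGroup (Fin n) ℂ) :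
    (V * A * Vᴴ).PosDef := by
  have hVV : V * Vᴴ = 1 := Matrix.mem_unitaryGroup_iff.mp hV
  refine Matrix.PosDef.of_dotProduct_mulVec_pos ?_ ?_
  · exact Matrix.isHermitian_mul_mul_conjTranspose V hA.1
  · intro x hx
    have h1 : Vᴴ *ᵥ x ≠ 0 := by
      intro h
      apply hx
      have := congrArg (fun y => V *ᵥ y) h
      simpa [Matrix.mulVec_mulVec, hVV] using this
    simpa only [star_mulVec, dotProduct_mulVec, vecMul_vecMul, Matrix.mul_assoc,
      conjTranspose_conjTranspose] using hA.dotProduct_mulVec_pos h1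

private lemma mem_construct' (hn : 1 ≤ n) {Q : Matrix (Fin n) (Fin n) ℂ} (hQ : Q.PosSemidef)
    (h : Fin n → ℝ) (hpos : ∀ i, 0 < h i) (hdet : ∏ i, h i = (n : ℝ) ^ (-(n : ℤ))) :
    (∑ i, h i * hQ.1.eigenvalues i) ∈ {x : ℝ | ∃ H : Matrix (Fin n) (Fin n) ℂ,
        H.PosDef ∧ H.det = (n : ℂ) ^ (-(n : ℤ)) ∧ x = ((H * Q).trace).re} := by
  classical
  set V : Matrix (Fin n) (Fin n) ℂ := (hQ.1.eigenvectorUnitary : Matrix (Fin n) (Fin n) ℂ)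
  have hV : V ∈ Matrix.unitaryGroup (Fin n) ℂ := hQ.1.eigenvectorUnitary.2
  have hVV : V * Vᴴ = 1 := Matrix.mem_unitaryGroup_iff.mp hV
  have hVV' : Vᴴ * V = 1 := Matrix.mem_unitaryGroup_iff'.mp hV
  set D : Matrix (Fin n) (Fin n) ℂ := diagonal (Complex.ofReal ∘ h)
  refine ⟨V * D * Vᴴ, ?_, ?_, ?_⟩
  · exact unitary_conj_posDef'
      (Matrix.PosDef.diagonal (fun i => by
        simpa using Complex.zero_lt_real.mpr (hpos i))) hV
  · have hdV : V.det * Vᴴ.det = 1 := by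
      rw [← Matrix.det_mul, hVV, Matrix.det_one]
    rw [Matrix.det_mul, Matrix.det_mul, Matrix.det_diagonal]
    rw [show V.det * (∏ i, (Complex.ofReal ∘ h) i) * Vᴴ.det
        = (∏ i, (Complex.ofReal ∘ h) i) * (V.det * Vᴴ.det) by ring, hdV, mul_one]
    rw [show (∏ i, (Complex.ofReal ∘ h) i) = ((∏ i, h i : ℝ) : ℂ) by push_cast; rfl, hdet]
    push_cast [_root_.zpow_neg]
    simp
  · have hspec := hQ.1.spectral_theorem
    set L : Matrix (Fin n) (Fin n) ℂ := diagonal (Complex.ofReal ∘ hQ.1.eigenvalues)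
    have key : (V * D * Vᴴ) * Q = V * (D * L) * Vᴴ := by
      rw [hspec]
      change V * D * Vᴴ * (V * L * Vᴴ) = _
      simp only [Matrix.mul_assoc]
      rw [← Matrix.mul_assoc Vᴴ V, hVV', Matrix.one_mul]
    rw [key, Matrix.trace_mul_cycle, ← Matrix.mul_assoc, hVV', Matrix.one_mul]
    rw [Matrix.diagonal_mul_diagonal, Matrix.trace_diagonal]
    push_cast
    simp

private lemma trace_re_eq' {A : Matrix (Fin n) (Fin n) ℂ} (hA : A.IsHermitian) :
    A.trace.re = ∑ i, hA.eigenvalues i := by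
  classical
  have hVV' : (star (hA.eigenvectorUnitary : Matrix (Fin n) (Fin n) ℂ)) *
      (hA.eigenvectorUnitary : Matrix (Fin n) (Fin n) ℂ) = 1 :=
    Matrix.mem_unitaryGroup_iff'.mp hA.eigenvectorUnitary.2
  have h1 : A.trace = ((∑ i, hA.eigenvalues i : ℝ) : ℂ) := by
    conv_lhs => rw [hA.spectral_theorem]
    rw [Unitary.conjStarAlgAut_apply, Matrix.trace_mul_cycle, hVV', Matrix.one_mul, Matrix.trace_diagonal]
    push_cast
    rfl
  rw [h1, Complex.ofReal_re]

private lemma det_re_eq' {A : Matrix (Fin n) (Fin n) ℂ} (hA : A.IsHermitian) :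
    A.det.re = ∏ i, hA.eigenvalues i := by
  have h1 : A.det = ((∏ i, hA.eigenvalues i : ℝ) : ℂ) := by
    rw [hA.det_eq_prod_eigenvalues]; push_cast; rfl
  rw [h1, Complex.ofReal_re]

private lemma amgm_psd' (hn : 1 ≤ n) {M : Matrix (Fin n) (Fin n) ℂ} (hM : M.PosSemidef) :
    M.det.re ^ ((1 : ℝ)/n) ≤ M.trace.re / n := by
  have hn0 : (n : ℝ) ≠ 0 := Nat.cast_ne_zero.mpr (by omega)
  rw [det_re_eq' hM.1, trace_re_eq' hM.1]
  have hev : ∀ i ∈ Finset.univ, (0:ℝ) ≤ hM.1.eigenvalues i :=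
    fun i _ => hM.eigenvalues_nonneg i
  have key := Real.geom_mean_le_arith_mean_weighted Finset.univ
    (fun _ => (1:ℝ)/n) hM.1.eigenvalues (fun i _ => by positivity)
    (by simp [Finset.card_univ]; field_simp) hev
  calc (∏ i, hM.1.eigenvalues i) ^ ((1:ℝ)/n)
      = ∏ i, (hM.1.eigenvalues i) ^ ((1:ℝ)/n) :=
        (Real.finset_prod_rpow Finset.univ _ (fun i _ => hM.eigenvalues_nonneg i) _).symm
    _ ≤ ∑ i, (1/n : ℝ) * hM.1.eigenvalues i := key
    _ = (∑ i, hM.1.eigenvalues i) / n := by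
        rw [← Finset.mul_sum]; ring

end Helpers

/-- For `Q` positive semidefinite Hermitian, `(Re (det Q))^(1/n)` is the greatest lower bound
of the set of numbers `Re (trace (H * Q))` where `H` ranges over positive definite Hermitian
matrices with `det H = n^(-n)`. -/
theorem isGLB_re_trace_mul
    (n : ℕ) (hn : 1 ≤ n)
    (Q : Matrix (Fin n) (Fin n) ℂ)
    (hQ : Q.PosSemidef) :
    IsGLB {x : ℝ | ∃ H : Matrix (Fin n) (Fin n) ℂ,
        H.PosDef ∧ H.det = (n : ℂ) ^ (-(n : ℤ)) ∧ x = ((H * Q).trace).re}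
      ((Q.det.re) ^ ((1 : ℝ) / n)) := by
  classical
  have hn0 : (n : ℝ) ≠ 0 := Nat.cast_ne_zero.mpr (by omega)
  have hnpos : (0:ℝ) < n := by positivity
  set S := {x : ℝ | ∃ H : Matrix (Fin n) (Fin n) ℂ,
        H.PosDef ∧ H.det = (n : ℂ) ^ (-(n : ℤ)) ∧ x = ((H * Q).trace).re} with hS
  set lam := hQ.1.eigenvalues with hlam
  have hlam_nonneg : ∀ i, 0 ≤ lam i := fun i => hQ.eigenvalues_nonneg i
  have hd : Q.det.re = ∏ i, lam i := det_re_eq' hQ.1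
  have hd0 : 0 ≤ Q.det.re := hd ▸ Finset.prod_nonneg (fun i _ => hlam_nonneg i)
  -- Lower bound
  have lb : ∀ x ∈ S, (Q.det.re) ^ ((1:ℝ)/n) ≤ x := by
    rintro x ⟨H, hH, hHdet, rfl⟩
    set R := (open scoped MatrixOrder in CFC.sqrt H) with hR
    have hRps : R.PosSemidef := (open scoped MatrixOrder in Matrix.nonneg_iff_posSemidef.mp (CFC.sqrt_nonneg H))
    have hRH : Rᴴ = R := hRps.1
    have hRR : R * R = H := (open scoped MatrixOrder in CFC.sqrt_mul_sqrt_self H (Matrix.nonneg_iff_posSemidef.mpr hH.posSemidef))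
    have hMps : (R * Q * R).PosSemidef := by
      have := hQ.mul_mul_conjTranspose_same R
      rwa [hRH] at this
    have htr : (R * Q * R).trace = (H * Q).trace := by
      rw [Matrix.trace_mul_cycle, hRR]
    have hdet : (R * Q * R).det = (((n:ℝ) ^ (-(n:ℤ)) : ℝ) : ℂ) * Q.det := by
      rw [Matrix.det_mul, Matrix.det_mul,
        show R.det * Q.det * R.det = (R.det * R.det) * Q.det by ring,
        ← Matrix.det_mul, hRR, hHdet]
      push_cast [_root_.zpow_neg]
      simp
    have key := amgm_psd' hn hMps
    rw [htr, hdet] at key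
    have hre : ((((n:ℝ) ^ (-(n:ℤ)) : ℝ) : ℂ) * Q.det).re
        = (n:ℝ) ^ (-(n:ℤ)) * Q.det.re := Complex.re_ofReal_mul _ _
    rw [hre] at key
    have hnn : (0:ℝ) ≤ (n:ℝ) ^ (-(n:ℤ)) := by positivity
    rw [Real.mul_rpow hnn hd0] at key
    have hbase : ((n:ℝ) ^ (-(n:ℤ))) ^ ((1:ℝ)/n) = (n:ℝ)⁻¹ := by
      rw [show ((n:ℝ) ^ (-(n:ℤ))) = ((n:ℝ)⁻¹) ^ n by
            rw [_root_.zpow_neg, zpow_natCast, ← inv_pow],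
        one_div, Real.pow_rpow_inv_natCast (by positivity) (by omega)]
    rw [hbase] at key
    -- key : n⁻¹ * Q.det.re ^ (1/n) ≤ (H*Q).trace.re / n
    have key2 : Q.det.re ^ ((1:ℝ)/n) / n ≤ (H * Q).trace.re / n := by
      rw [div_eq_mul_inv, mul_comm]
      exact key
    exact (div_le_div_iff_of_pos_right hnpos).mp key2
  constructor
  · exact lb
  · -- greatest lower bound
    intro b hb
    rcases eq_or_lt_of_le hd0 with hzero | hpos
    · -- det = 0 case
      rw [← hzero, Real.zero_rpow (by positivity)]
      obtain ⟨j, -, hj⟩ := Finset.prod_eq_zero_iff.mp (hd ▸ hzero.symm)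
      by_contra hb0
      push_neg at hb0
      set T : ℝ := ∑ i, lam i with hT
      have hT0 : 0 ≤ T := Finset.sum_nonneg fun i _ => hlam_nonneg i
      set ε : ℝ := b / (2 * (T + 1)) with hε
      have hεpos : 0 < ε := by positivity
      set h : Fin n → ℝ := fun i => if i = j then (n:ℝ) ^ (-(n:ℤ)) / ε ^ (n-1) else ε with hh
      have hpos' : ∀ i, 0 < h i := by
        intro i
        by_cases hij : i = j <;> simp [hh, hij] <;> positivity
      have hprod : ∏ i, h i = (n:ℝ) ^ (-(n:ℤ)) := by
        rw [← Finset.mul_prod_erase Finset.univ h (Finset.mem_univ j)]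
        have h2 : ∏ i ∈ Finset.univ.erase j, h i = ε ^ (n-1) := by
          have h3 : ∏ i ∈ Finset.univ.erase j, h i = ∏ _i ∈ Finset.univ.erase j, ε :=
            Finset.prod_congr rfl (fun i hi => by simp [hh, Finset.ne_of_mem_erase hi])
          rw [h3, Finset.prod_const,
            Finset.card_erase_of_mem (Finset.mem_univ j), Finset.card_univ,
            Fintype.card_fin]
        rw [h2]
        simp only [hh, if_pos rfl]
        field_simp
      have hmem := mem_construct' hn hQ h hpos' hprod
      have hval : (∑ i, h i * lam i) ≤ ε * T := by
        have : ∀ i, h i * lam i ≤ ε * lam i := by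
          intro i
          by_cases hij : i = j
          · subst hij; simp [hj]
          · simp [hh, hij]
        calc (∑ i, h i * lam i) ≤ ∑ i, ε * lam i := Finset.sum_le_sum (fun i _ => this i)
          _ = ε * T := by rw [← Finset.mul_sum]
      have hble := hb hmem
      have : b ≤ ε * T := le_trans hble hval
      have hcontr : ε * T < b := by
        have h1 : ε * T ≤ ε * (T + 1) := by nlinarith
        have h2 : ε * (T + 1) = b / 2 := by
          rw [hε]; field_simp
        linarith
      linarith
    · -- det > 0 case: the infimum is attained
      have hlampos : ∀ i, 0 < lam i := by
        intro i
        rcases lt_or_eq_of_le (hlam_nonneg i) with h | h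
        · exact h
        · exfalso
          have : (∏ i, lam i) = 0 := Finset.prod_eq_zero (Finset.mem_univ i) h.symm
          rw [← hd] at this
          linarith
      set c : ℝ := Q.det.re ^ ((1:ℝ)/n) with hc
      have hcpos : 0 < c := Real.rpow_pos_of_pos hpos _
      set h : Fin n → ℝ := fun i => c / (n * lam i) with hh
      have hpos' : ∀ i, 0 < h i := fun i => by
        have := hlampos i; simp only [hh]; positivity
      have hprod : ∏ i, h i = (n:ℝ) ^ (-(n:ℤ)) := by
        rw [hh]
        rw [Finset.prod_div_distrib, Finset.prod_const, Finset.prod_mul_distrib,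
          Finset.prod_const, Finset.card_univ, Fintype.card_fin, ← hd]
        rw [show c ^ n = Q.det.re by
          rw [hc, one_div, Real.rpow_inv_natCast_pow hd0 (by omega)]]
        rw [_root_.zpow_neg, zpow_natCast]
        field_simp
      have hval : (∑ i, h i * lam i) = c := by
        have : ∀ i, h i * lam i = c / n := by
          intro i
          have hl := (hlampos i).ne'
          simp only [hh]
          field_simp
        rw [Finset.sum_congr rfl (fun i _ => this i), Finset.sum_const,
          Finset.card_univ, Fintype.card_fin, nsmul_eq_mul]
        field_simp
      have hmem := mem_construct' hn hQ h hpos' hprod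
      rw [hval] at hmem
      exact hb hmem
end

section
/- Let n ≥ 1, let Q be an n×n complex positive semidefinite Hermitian matrix and let c ≥ 0 be a real number. Then Re(det Q) ≥ c^n if and only if for every n×n complex positive definite Hermitian matrix H with det H = n^(-n) one has Re(trace(H * Q)) ≥ c. -/
open ComplexOrder Matrix Finset
open scoped MatrixOrder

variable {n : ℕ}

lemma my_trace_eq_sum_eigenvalues {A : Matrix (Fin n) (Fin n) ℂ} (hA : A.IsHermitian) :
    A.trace = ∑ i, (hA.eigenvalues i : ℂ) := by
  conv_lhs => rw [hA.spectral_theorem, Unitary.conjStarAlgAut_apply]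
  rw [Matrix.trace_mul_cycle, Matrix.mem_unitaryGroup_iff'.mp (hA.eigenvectorUnitary).2,
    one_mul, Matrix.trace_diagonal]
  rfl

lemma my_posDef_conj {U D : Matrix (Fin n) (Fin n) ℂ}
    (hU : U ∈ Matrix.unitaryGroup (Fin n) ℂ) (hD : D.PosDef) :
    (U * D * star U).PosDef := by
  rw [Matrix.posDef_iff_dotProduct_mulVec]
  constructor
  · have : (star U : Matrix (Fin n) (Fin n) ℂ) = Uᴴ := rfl
    rw [this]
    exact Matrix.isHermitian_mul_mul_conjTranspose U hD.1
  · intro x hx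
    have hxU : (star U) *ᵥ x ≠ 0 := by
      intro h
      apply hx
      have := congrArg (fun v => U *ᵥ v) h
      simpa [Matrix.mulVec_mulVec, Matrix.mem_unitaryGroup_iff.mp hU] using this
    have := hD.dotProduct_mulVec_pos hxU
    convert this using 1
    simp only [Matrix.star_mulVec, Matrix.dotProduct_mulVec, Matrix.vecMul_vecMul,
      Matrix.conjTranspose_conjTranspose, Matrix.mul_assoc]
    rw [show ((star U)ᴴ : Matrix (Fin n) (Fin n) ℂ) = U from star_star U]

lemma my_construct {Q : Matrix (Fin n) (Fin n) ℂ} (hQ : Q.PosSemidef) (t : Fin n → ℝ)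
    (ht : ∀ i, 0 < t i) :
    ∃ H : Matrix (Fin n) (Fin n) ℂ, H.PosDef ∧ H.det = ((∏ i, t i : ℝ) : ℂ) ∧
      ((H * Q).trace).re = ∑ i, t i * hQ.1.eigenvalues i := by
  set U := (hQ.1.eigenvectorUnitary : Matrix (Fin n) (Fin n) ℂ) with hUdef
  have hU : U ∈ Matrix.unitaryGroup (Fin n) ℂ := (hQ.1.eigenvectorUnitary).2
  have h1 : U * star U = 1 := Matrix.mem_unitaryGroup_iff.mp hU
  have h2 : star U * U = 1 := Matrix.mem_unitaryGroup_iff'.mp hU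
  set Dt : Matrix (Fin n) (Fin n) ℂ := Matrix.diagonal (fun i => (t i : ℂ)) with hDt
  set Dl : Matrix (Fin n) (Fin n) ℂ :=
    Matrix.diagonal (RCLike.ofReal ∘ hQ.1.eigenvalues) with hDl
  refine ⟨U * Dt * star U, ?_, ?_, ?_⟩
  · refine my_posDef_conj hU ?_
    rw [hDt, Matrix.posDef_diagonal_iff]
    intro i
    exact_mod_cast ht i
  · calc (U * Dt * star U).det = U.det * Dt.det * (star U).det := by
          rw [Matrix.det_mul, Matrix.det_mul]
      _ = (U.det * (star U).det) * Dt.det := by ring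
      _ = Dt.det := by rw [← Matrix.det_mul, h1, Matrix.det_one, one_mul]
      _ = ((∏ i, t i : ℝ) : ℂ) := by rw [hDt, Matrix.det_diagonal]; push_cast; rfl
  · have key : (U * Dt * star U) * Q = U * (Dt * Dl) * star U := by
      conv_lhs => rw [hQ.1.spectral_theorem, Unitary.conjStarAlgAut_apply]
      rw [Matrix.mul_assoc (U * Dt) (star U) _, ← Matrix.mul_assoc (star U) (U * Dl) (star U),
        ← Matrix.mul_assoc (star U) U Dl, h2, one_mul]
      simp [Matrix.mul_assoc]
    rw [key, Matrix.trace_mul_cycle, h2, one_mul, hDt, hDl,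
      Matrix.diagonal_mul_diagonal, Matrix.trace_diagonal]
    simp

/-- For `Q` positive semidefinite Hermitian and `c ≥ 0`, one has `Re (det Q) ≥ c^n` iff
`Re (trace (H * Q)) ≥ c` for every positive definite Hermitian `H` with `det H = n^(-n)`. -/
theorem re_det_ge_pow_iff_forall_re_trace_ge
    (n : ℕ) (hn : 1 ≤ n)
    (Q : Matrix (Fin n) (Fin n) ℂ)
    (hQ : Q.PosSemidef) (c : ℝ) (hc : 0 ≤ c) :
    c ^ n ≤ Q.det.re ↔
      ∀ H : Matrix (Fin n) (Fin n) ℂ,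
        H.PosDef → H.det = (n : ℂ) ^ (-(n : ℤ)) → c ≤ ((H * Q).trace).re := by
  have hnne : n ≠ 0 := by omega
  have hnR : (0:ℝ) < (n:ℝ) := by exact_mod_cast Nat.pos_of_ne_zero hnne
  set lam := hQ.1.eigenvalues with hlamdef
  have hlam : ∀ i, 0 ≤ lam i := hQ.eigenvalues_nonneg
  set P := ∏ i, lam i with hPdef
  have hP0 : 0 ≤ P := Finset.prod_nonneg fun i _ => hlam i
  have hdetQ : Q.det = (P : ℂ) := by
    rw [hQ.1.det_eq_prod_eigenvalues, hPdef]; push_cast; rfl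
  have hre : Q.det.re = P := by rw [hdetQ, Complex.ofReal_re]
  have hzc : ((n:ℝ) ^ (-(n:ℤ)) : ℝ) > 0 := by positivity
  have hcastpow : (((n:ℝ) ^ (-(n:ℤ)) : ℝ) : ℂ) = (n:ℂ) ^ (-(n:ℤ)) := by push_cast; ring
  constructor
  · -- forward
    intro hd H hH hHdet
    set S := CFC.sqrt H with hSdef
    have hS : S * S = H := CFC.sqrt_mul_sqrt_self H hH.posSemidef.nonneg
    have hSh : S.IsHermitian := (Matrix.nonneg_iff_posSemidef.mp (CFC.sqrt_nonneg H)).1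
    have hM : (S * Q * S).PosSemidef := by
      have := hQ.conjTranspose_mul_mul_same S
      rwa [hSh.eq] at this
    set μ := hM.1.eigenvalues with hμdef
    have hμ0 : ∀ i, 0 ≤ μ i := hM.eigenvalues_nonneg
    have htr : (S * Q * S).trace = (H * Q).trace := by
      rw [Matrix.trace_mul_cycle, hS]
    have hsum : ∑ i, μ i = ((H * Q).trace).re := by
      rw [← htr, my_trace_eq_sum_eigenvalues hM.1, Complex.re_sum]
      simp
      rfl
    have hdetM : (S * Q * S).det = (n:ℂ) ^ (-(n:ℤ)) * Q.det := by
      calc (S * Q * S).det = S.det * Q.det * S.det := by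
            rw [Matrix.det_mul, Matrix.det_mul]
        _ = (S.det * S.det) * Q.det := by ring
        _ = (S * S).det * Q.det := by rw [Matrix.det_mul]
        _ = _ := by rw [hS, hHdet]
    have hprodμ : ∏ i, μ i = (n:ℝ) ^ (-(n:ℤ)) * P := by
      have hcx : ((∏ i, μ i : ℝ) : ℂ) = (((n:ℝ) ^ (-(n:ℤ)) * P : ℝ) : ℂ) := by
        push_cast
        rw [show (∏ i, ((μ i : ℝ):ℂ)) = (S * Q * S).det from
          (hM.1.det_eq_prod_eigenvalues).symm, hdetM, hdetQ]
      exact_mod_cast hcx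
    have amgm := Real.geom_mean_le_arith_mean_weighted Finset.univ
      (fun _ => (n:ℝ)⁻¹) μ (fun i _ => by positivity)
      (by rw [Finset.sum_const, Finset.card_univ, Fintype.card_fin, nsmul_eq_mul]; field_simp) (fun i _ => hμ0 i)
    have hlhs : (∏ i, μ i ^ ((n:ℝ)⁻¹)) = (n:ℝ)⁻¹ * P ^ ((n:ℝ)⁻¹) := by
      rw [Real.finset_prod_rpow _ _ (fun i _ => hμ0 i), hprodμ,
        Real.mul_rpow (le_of_lt hzc) hP0]
      congr 1
      rw [← Real.rpow_intCast (n:ℝ) (-(n:ℤ)), ← Real.rpow_mul (le_of_lt hnR)]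
      rw [show ((-(n:ℤ) : ℤ):ℝ) * (n:ℝ)⁻¹ = -1 by push_cast; field_simp]
      exact Real.rpow_neg_one _
    have hrhs : (∑ i : Fin n, (n:ℝ)⁻¹ * μ i) = (n:ℝ)⁻¹ * ∑ i, μ i := by
      rw [Finset.mul_sum]
    rw [hlhs, hrhs] at amgm
    have h1 : P ^ ((n:ℝ)⁻¹) ≤ ∑ i, μ i := by
      have := (mul_le_mul_iff_of_pos_left (by positivity : (0:ℝ) < (n:ℝ)⁻¹)).mp amgm
      exact this
    have h2 : c ≤ P ^ ((n:ℝ)⁻¹) := by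
      have hc' : c = (c ^ n) ^ ((n:ℝ)⁻¹) :=
        (Real.pow_rpow_inv_natCast hc hnne).symm
      rw [hc']
      exact Real.rpow_le_rpow (by positivity) (hre ▸ hd) (by positivity)
    linarith [hsum ▸ (h2.trans h1)]
  · -- backward
    intro h
    rcases eq_or_lt_of_le hP0 with hPz | hPpos
    · -- P = 0 ; show c = 0
      obtain ⟨j, -, hj⟩ := Finset.prod_eq_zero_iff.mp hPz.symm
      have hSl : (0:ℝ) ≤ ∑ i, lam i := Finset.sum_nonneg fun i _ => hlam i
      have hc0 : c = 0 := by
        by_contra hcne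
        have hcpos : 0 < c := lt_of_le_of_ne hc (Ne.symm hcne)
        set ε := c / (2 * (∑ i, lam i + 1)) with hεdef
        have hεpos : 0 < ε := by positivity
        set t : Fin n → ℝ := fun i => if i = j then (n:ℝ) ^ (-(n:ℤ)) / ε ^ (n-1) else ε
          with htdef
        have htpos : ∀ i, 0 < t i := by
          intro i
          rw [htdef]
          dsimp only
          split <;> positivity
        have hprod : ∏ i, t i = (n:ℝ) ^ (-(n:ℤ)) := by
          rw [← Finset.mul_prod_erase Finset.univ t (Finset.mem_univ j)]
          have he1 : ∀ i ∈ Finset.univ.erase j, t i = ε := fun i hi => by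
            simp only [htdef, if_neg (Finset.mem_erase.mp hi).1]
          have he2 : ∏ i ∈ Finset.univ.erase j, t i = ε ^ (n - 1) := by
            rw [Finset.prod_congr rfl he1, Finset.prod_const,
              Finset.card_erase_of_mem (Finset.mem_univ j), Finset.card_univ,
              Fintype.card_fin]
          have he3 : t j = (n:ℝ) ^ (-(n:ℤ)) / ε ^ (n-1) := by
            simp only [htdef, if_pos rfl]
          rw [he2, he3, div_mul_cancel₀ _ (by positivity : ε ^ (n-1) ≠ 0)]
        obtain ⟨H, hHpd, hHdet, hHtr⟩ := my_construct hQ t htpos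
        have := h H hHpd (by rw [hHdet, hprod, hcastpow])
        rw [hHtr] at this
        have hsumeq : ∑ i, t i * lam i = ε * ∑ i, lam i := by
          rw [Finset.mul_sum]
          refine Finset.sum_congr rfl fun i _ => ?_
          by_cases hij : i = j
          · subst hij; rw [hj]; ring
          · rw [htdef]; dsimp only; rw [if_neg hij]
        have hlt : ε * (∑ i, lam i) < c := by
          rw [hεdef, div_mul_eq_mul_div, div_lt_iff₀ (by positivity)]
          nlinarith [mul_nonneg hc hSl, hcpos, hSl]
        rw [hsumeq] at this
        linarith
      rw [hre, ← hPz, hc0, zero_pow hnne]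
    · -- P > 0
      have hlp : ∀ i, 0 < lam i := by
        intro i
        rcases lt_or_eq_of_le (hlam i) with h' | h'
        · exact h'
        · exfalso
          have : P = 0 := Finset.prod_eq_zero (Finset.mem_univ i) h'.symm
          rw [this] at hPpos; exact lt_irrefl _ hPpos
      set a := (n:ℝ)⁻¹ * P ^ ((n:ℝ)⁻¹) with hadef
      have hapos : 0 < a := by
        rw [hadef]; positivity
      set t : Fin n → ℝ := fun i => a / lam i with htdef
      have htpos : ∀ i, 0 < t i := fun i => div_pos hapos (hlp i)
      have hprod : ∏ i, t i = (n:ℝ) ^ (-(n:ℤ)) := by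
        rw [htdef]
        dsimp only
        rw [Finset.prod_div_distrib, Finset.prod_const, Finset.card_univ, Fintype.card_fin,
          ← hPdef, hadef, mul_pow, ← Real.rpow_natCast (P ^ ((n:ℝ)⁻¹)) n,
          ← Real.rpow_mul hP0]
        · rw [show (n:ℝ)⁻¹ * (n:ℕ) = 1 by field_simp, Real.rpow_one,
            mul_div_assoc, div_self (ne_of_gt hPpos), mul_one, inv_pow,
            ← zpow_natCast (n:ℝ) n, ← _root_.zpow_neg]
      obtain ⟨H, hHpd, hHdet, hHtr⟩ := my_construct hQ t htpos
      have hkey := h H hHpd (by rw [hHdet, hprod, hcastpow])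
      rw [hHtr] at hkey
      have hsumeq : ∑ i, t i * lam i = P ^ ((n:ℝ)⁻¹) := by
        rw [htdef]
        dsimp only
        rw [Finset.sum_congr rfl (fun i _ => div_mul_cancel₀ a (ne_of_gt (hlp i))),
          Finset.sum_const, Finset.card_univ, Fintype.card_fin, hadef, nsmul_eq_mul]
        field_simp
      rw [hsumeq] at hkey
      have : c ^ n ≤ (P ^ ((n:ℝ)⁻¹)) ^ n := pow_le_pow_left₀ hc hkey n
      rw [Real.rpow_inv_natCast_pow hP0 hnne] at this
      rw [hre]
      exact this
end

section
/- Let 0 < l < ∞, let ω : [0,l] → ℝ be a modulus of continuity, and let ω̄ : [0,l] → ℝ be the minimal concave majorant of ω, i.e. ω̄ is concave on [0,l], ω(t) ≤ ω̄(t) for all t ∈ [0,l], and ω̄ ≤ g for every function g that is concave on [0,l] and satisfies ω ≤ g on [0,l]. Then for every t > 0 and η > 0 with ηt ∈ [0,l] and t ∈ [0,l], one has ω(ηt) ≤ ω̄(ηt) ≤ (1+η)·ω(t). -/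
/-- If `ω` is a modulus of continuity on `[0, l]` and `ω̄` is its minimal concave majorant,
then for every `t > 0` and `η > 0` (with `t, ηt ∈ [0, l]`) one has
`ω(ηt) ≤ ω̄(ηt) ≤ (1 + η) ω(t)`. -/
theorem modulus_minimal_concave_majorant_estimate
    (l : ℝ) (hl : 0 < l)
    (ω ωbar : ℝ → ℝ)
    (hω_cont : ContinuousOn ω (Set.Icc 0 l))
    (hω_mono : MonotoneOn ω (Set.Icc 0 l))
    (hω_subadd : ∀ s t : ℝ, 0 ≤ s → 0 ≤ t → s + t ≤ l → ω (s + t) ≤ ω s + ω t)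
    (hω_zero : ω 0 = 0)
    (hωbar_concave : ConcaveOn ℝ (Set.Icc 0 l) ωbar)
    (hωbar_maj : ∀ t ∈ Set.Icc (0 : ℝ) l, ω t ≤ ωbar t)
    (hωbar_min : ∀ g : ℝ → ℝ, ConcaveOn ℝ (Set.Icc 0 l) g →
      (∀ t ∈ Set.Icc (0 : ℝ) l, ω t ≤ g t) → ∀ t ∈ Set.Icc (0 : ℝ) l, ωbar t ≤ g t) :
    ∀ t η : ℝ, 0 < t → 0 < η → t ∈ Set.Icc (0 : ℝ) l → η * t ∈ Set.Icc (0 : ℝ) l →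
      ω (η * t) ≤ ωbar (η * t) ∧ ωbar (η * t) ≤ (1 + η) * ω t := by
  intro t η ht hη htmem hηtmem
  obtain ⟨ht0, htl⟩ := htmem
  refine ⟨hωbar_maj _ hηtmem, ?_⟩
  have hωt0 : 0 ≤ ω t := by
    rw [← hω_zero]
    exact hω_mono ⟨le_refl 0, le_of_lt hl⟩ ⟨ht0, htl⟩ ht0
  -- key: ω s ≤ (n+1) ω t whenever s ≤ (n+1) t, s ∈ [0,l]
  have key : ∀ n : ℕ, ∀ s : ℝ, 0 ≤ s → s ≤ l → s ≤ (n + 1) * t → ω s ≤ (n + 1) * ω t := by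
    intro n
    induction n with
    | zero =>
      intro s hs0 hsl hst
      push_cast at hst
      simpa using hω_mono ⟨hs0, hsl⟩ ⟨ht0, htl⟩ (by linarith)
    | succ n ih =>
      intro s hs0 hsl hst
      by_cases hcase : s ≤ (n + 1) * t
      · have := ih s hs0 hsl hcase
        push_cast
        push_cast at this
        nlinarith
      · push_neg at hcase
        have hst' : t ≤ s := by
          have : (1 : ℝ) * t ≤ (n + 1) * t := by
            apply mul_le_mul_of_nonneg_right _ ht0
            push_cast; linarith [Nat.cast_nonneg (α := ℝ) n]
          linarith
        have h1 : ω s ≤ ω t + ω (s - t) := by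
          have := hω_subadd t (s - t) ht0 (by linarith) (by linarith)
          simpa using this
        have h2 : ω (s - t) ≤ (n + 1) * ω t := by
          apply ih (s - t) (by linarith) (by linarith)
          push_cast at hst ⊢
          linarith
        push_cast
        push_cast at h2
        linarith
  -- the affine majorant g s = ω t + (ω t / t) * s
  set g : ℝ → ℝ := fun s => ω t + (ω t / t) * s with hg
  have hg_concave : ConcaveOn ℝ (Set.Icc 0 l) g := by
    refine ⟨convex_Icc 0 l, ?_⟩
    intro x hx y hy a b ha hb hab
    simp only [hg, smul_eq_mul]
    nlinarith [mul_nonneg ha hb]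
  have hg_maj : ∀ s ∈ Set.Icc (0 : ℝ) l, ω s ≤ g s := by
    intro s hs
    obtain ⟨hs0, hsl⟩ := hs
    set n : ℕ := ⌊s / t⌋₊ with hn
    have hn1 : (n : ℝ) ≤ s / t := Nat.floor_le (div_nonneg hs0 ht0)
    have hn2 : s / t < n + 1 := Nat.lt_floor_add_one _
    have h1 : ω s ≤ (n + 1) * ω t := by
      apply key n s hs0 hsl
      rw [div_lt_iff₀ ht] at hn2
      linarith
    have h2 : ((n : ℝ) + 1) * ω t ≤ g s := by
      simp only [hg]
      have : (n : ℝ) * ω t ≤ (s / t) * ω t := mul_le_mul_of_nonneg_right hn1 hωt0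
      have heq : (s / t) * ω t = (ω t / t) * s := by field_simp
      linarith [heq ▸ this]
    linarith
  have := hωbar_min g hg_concave hg_maj (η * t) hηtmem
  have hgval : g (η * t) = (1 + η) * ω t := by
    simp only [hg]
    field_simp
  linarith [hgval ▸ this]
end

section
/- Let E be a metric space, L ≥ 0, and let g : E → ℝ be an L-Lipschitz function with g(z) ≤ 0 for all z ∈ E. Let ω̄ : [0,∞) → ℝ be nondecreasing and concave with ω̄(0) = 0, and define h : E → ℝ by h(z) = -ω̄(√(-g(z))). Then for all z, y ∈ E one has |h(z) - h(y)| ≤ ω̄(√(L · dist(z,y))). -/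
lemma sqrt_add_le' (a b : ℝ) (ha : 0 ≤ a) (hb : 0 ≤ b) :
    Real.sqrt (a + b) ≤ Real.sqrt a + Real.sqrt b := by
  rw [show a + b = Real.sqrt a ^ 2 + Real.sqrt b ^ 2 by
    rw [Real.sq_sqrt ha, Real.sq_sqrt hb]]
  have h1 := Real.sqrt_nonneg a
  have h2 := Real.sqrt_nonneg b
  rw [show Real.sqrt a + Real.sqrt b = Real.sqrt ((Real.sqrt a + Real.sqrt b) ^ 2) from
    (Real.sqrt_sq (by positivity)).symm]
  apply Real.sqrt_le_sqrt; nlinarith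

lemma concave_subadd (ωbar : ℝ → ℝ) (hconc : ConcaveOn ℝ (Set.Ici 0) ωbar)
    (hzero : ωbar 0 = 0) (a t : ℝ) (ha : 0 ≤ a) (ht : 0 ≤ t) :
    ωbar (a + t) ≤ ωbar a + ωbar t := by
  rcases eq_or_lt_of_le (by positivity : (0:ℝ) ≤ a + t) with h | h
  · have ha0 : a = 0 := by linarith
    have ht0 : t = 0 := by linarith
    simp [ha0, ht0, hzero]
  · have h1 := hconc.2 (Set.mem_Ici.2 le_rfl) (Set.mem_Ici.2 (by positivity : (0:ℝ) ≤ a + t))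
      (by positivity : 0 ≤ t / (a + t)) (by positivity : 0 ≤ a / (a + t))
      (by field_simp; ring)
    have h2 := hconc.2 (Set.mem_Ici.2 le_rfl) (Set.mem_Ici.2 (by positivity : (0:ℝ) ≤ a + t))
      (by positivity : 0 ≤ a / (a + t)) (by positivity : 0 ≤ t / (a + t))
      (by field_simp)
    rw [smul_eq_mul, smul_eq_mul, smul_zero, zero_add, hzero] at h1 h2
    have e1 : a / (a + t) * (a + t) = a := by field_simp
    have e2 : t / (a + t) * (a + t) = t := by field_simp
    rw [smul_eq_mul, e1] at h1
    rw [smul_eq_mul, e2] at h2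
    have e3 : a / (a + t) * ωbar (a + t) + t / (a + t) * ωbar (a + t) = ωbar (a + t) := by
      field_simp
    linarith

/-- If `g : E → ℝ` is `L`-Lipschitz and nonpositive, and `ω̄ : [0,∞) → ℝ` is nondecreasing and
concave with `ω̄(0) = 0`, then `h(z) = -ω̄(√(-g z))` satisfies
`|h z - h y| ≤ ω̄(√(L · dist z y))` for all `z, y`. -/
theorem modulus_estimate_of_lipschitz_barrier
    {E : Type*} [MetricSpace E]
    (L : ℝ) (hL : 0 ≤ L)
    (g : E → ℝ)
    (hg_lip : ∀ z y : E, |g z - g y| ≤ L * dist z y)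
    (hg_nonpos : ∀ z : E, g z ≤ 0)
    (ωbar : ℝ → ℝ)
    (hmono : MonotoneOn ωbar (Set.Ici 0))
    (hconc : ConcaveOn ℝ (Set.Ici 0) ωbar)
    (hzero : ωbar 0 = 0) :
    ∀ z y : E, |(-ωbar (Real.sqrt (-g z))) - (-ωbar (Real.sqrt (-g y)))| ≤
      ωbar (Real.sqrt (L * dist z y)) := by
  -- main step for one ordering
  have key : ∀ z y : E, Real.sqrt (-g z) ≤ Real.sqrt (-g y) →
      ωbar (Real.sqrt (-g y)) - ωbar (Real.sqrt (-g z)) ≤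
        ωbar (Real.sqrt (L * dist z y)) := by
    intro z y hle
    set a := Real.sqrt (-g z) with ha
    set b := Real.sqrt (-g y) with hb
    have ha0 : 0 ≤ a := Real.sqrt_nonneg _
    have hb0 : 0 ≤ b := Real.sqrt_nonneg _
    have hLd : 0 ≤ L * dist z y := by positivity
    -- b ≤ a + √(L * dist z y)
    have hba : b ≤ a + Real.sqrt (L * dist z y) := by
      have h1 : -g y ≤ -g z + L * dist z y := by
        have := hg_lip z y
        have := abs_le.1 this
        linarith [this.1]
      calc b ≤ Real.sqrt (-g z + L * dist z y) := Real.sqrt_le_sqrt h1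
        _ ≤ a + Real.sqrt (L * dist z y) :=
          sqrt_add_le' _ _ (by linarith [hg_nonpos z]) hLd
    have hsub : ωbar (a + Real.sqrt (L * dist z y)) ≤ ωbar a + ωbar (Real.sqrt (L * dist z y)) :=
      concave_subadd ωbar hconc hzero a _ ha0 (Real.sqrt_nonneg _)
    have hm : ωbar b ≤ ωbar (a + Real.sqrt (L * dist z y)) :=
      hmono (Set.mem_Ici.2 hb0) (Set.mem_Ici.2 (by positivity)) hba
    linarith
  intro z y
  rcases le_total (Real.sqrt (-g z)) (Real.sqrt (-g y)) with h | h
  · rw [abs_of_nonneg (by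
      have := hmono (Set.mem_Ici.2 (Real.sqrt_nonneg (-g z)))
        (Set.mem_Ici.2 (Real.sqrt_nonneg (-g y))) h
      linarith)]
    have := key z y h
    linarith
  · rw [abs_sub_comm, abs_of_nonneg (by
      have := hmono (Set.mem_Ici.2 (Real.sqrt_nonneg (-g y)))
        (Set.mem_Ici.2 (Real.sqrt_nonneg (-g z))) h
      linarith)]
    have := key y z h
    rw [dist_comm] at this
    linarith
end
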